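/- Let 0 < ρ⁻ ≤ m ≤ ρ⁺ be real numbers. Then for all X, Y ∈ [ρ⁻ − m, ρ⁺ − m] with X ≠ Y one has (3/4)·(X⁴ − Y⁴)/(X − Y)³ + m·(X³ − Y³)/(X − Y)³ ≥ (1/4)·(ρ⁻/ρ⁺)·ρ⁻. -/

import Mathlib

lemma key_quad (ρm ρp s : ℝ) (h1 : 0 < ρm) (hmp : ρm ≤ ρp)
    (hs1 : 2 * ρm ≤ s) (hs2 : s ≤ 2 * ρp) :
    3 * ρm ^ 2 * s ≤ ρp * s ^ 2 + 2 * ρm ^ 2 * ρp := by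
  nlinarith [sq_nonneg (s - 2 * ρm), mul_nonneg (sub_nonneg.2 hs1) (sub_nonneg.2 hmp),
    mul_pos h1 h1, mul_nonneg (sub_nonneg.2 hs1) (sub_nonneg.2 hs2)]

lemma key_poly (ρm ρp m a b : ℝ) (h1 : 0 < ρm)
    (hma : ρm ≤ a) (hap : a ≤ ρp) (hmb : ρm ≤ b) (hbp : b ≤ ρp) :
    1 / 4 * ρm ^ 2 * (a - b) ^ 2 ≤
      ρp * (3 / 2 * (a + b) * m ^ 2 - 2 * (a ^ 2 + a * b + b ^ 2) * m
        + 3 / 4 * (a + b) * (a ^ 2 + b ^ 2)) := by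
  have hmp : ρm ≤ ρp := le_trans hma hap
  have hs : 0 < a + b := by linarith
  have hρp : 0 < ρp := lt_of_lt_of_le h1 hmp
  -- key identity: 12*(a+b)*N = 2*(3(a+b)m - 2(a²+ab+b²))² + (a-b)²*((a+b)²+2ab)
  have hab : ρm ^ 2 ≤ a * b := by nlinarith [mul_nonneg (sub_nonneg.2 hma) (sub_nonneg.2 hmb)]
  have hquad := key_quad ρm ρp (a + b) h1 hmp (by linarith) (by linarith)
  -- ρp*((a+b)²+2ab) ≥ 3ρm²(a+b)
  have hkey : 3 * ρm ^ 2 * (a + b) ≤ ρp * ((a + b) ^ 2 + 2 * (a * b)) := by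
    nlinarith [mul_le_mul_of_nonneg_left hab (le_of_lt hρp)]
  -- multiply target by 12*(a+b) > 0
  rw [← mul_le_mul_iff_of_pos_left (show (0:ℝ) < 12 * (a + b) by linarith)]
  have hid : 12 * (a + b) * (ρp * (3 / 2 * (a + b) * m ^ 2 - 2 * (a ^ 2 + a * b + b ^ 2) * m
        + 3 / 4 * (a + b) * (a ^ 2 + b ^ 2)))
      = 2 * ρp * (3 * (a + b) * m - 2 * (a ^ 2 + a * b + b ^ 2)) ^ 2
        + (a - b) ^ 2 * (ρp * ((a + b) ^ 2 + 2 * (a * b))) := by ring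
  rw [hid]
  have h2 : (a - b) ^ 2 * (3 * ρm ^ 2 * (a + b)) ≤
      (a - b) ^ 2 * (ρp * ((a + b) ^ 2 + 2 * (a * b))) :=
    mul_le_mul_of_nonneg_left hkey (sq_nonneg _)
  nlinarith [sq_nonneg (3 * (a + b) * m - 2 * (a ^ 2 + a * b + b ^ 2)), hρp.le,
    mul_nonneg hρp.le (sq_nonneg (3 * (a + b) * m - 2 * (a ^ 2 + a * b + b ^ 2)))]

/-- Explicit quantitative lower bound for the symmetrized weight `Ψ₂`: for
`0 < ρ⁻ ≤ m ≤ ρ⁺` and all `X ≠ Y` in `[ρ⁻ − m, ρ⁺ − m]`,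
`(3/4)·(X⁴ − Y⁴)/(X − Y)³ + m·(X³ − Y³)/(X − Y)³ ≥ (1/4)·(ρ⁻/ρ⁺)·ρ⁻`. -/
theorem symmetrized_weight_q2_lower_bound (ρm m ρp : ℝ)
    (h1 : 0 < ρm) (h2 : ρm ≤ m) (h3 : m ≤ ρp)
    (X Y : ℝ) (hX : X ∈ Set.Icc (ρm - m) (ρp - m)) (hY : Y ∈ Set.Icc (ρm - m) (ρp - m))
    (hXY : X ≠ Y) :
    1 / 4 * (ρm / ρp) * ρm ≤
      3 / 4 * ((X ^ 4 - Y ^ 4) / (X - Y) ^ 3) + m * ((X ^ 3 - Y ^ 3) / (X - Y) ^ 3) := by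
  obtain ⟨hX1, hX2⟩ := hX
  obtain ⟨hY1, hY2⟩ := hY
  have hρp : 0 < ρp := lt_of_lt_of_le h1 (le_trans h2 h3)
  have hd : X - Y ≠ 0 := sub_ne_zero.2 hXY
  have hd2 : 0 < (X - Y) ^ 2 := by positivity
  have hrw : 3 / 4 * ((X ^ 4 - Y ^ 4) / (X - Y) ^ 3) + m * ((X ^ 3 - Y ^ 3) / (X - Y) ^ 3)
      = (3 / 4 * (X ^ 3 + X ^ 2 * Y + X * Y ^ 2 + Y ^ 3)
          + m * (X ^ 2 + X * Y + Y ^ 2)) / (X - Y) ^ 2 := by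
    field_simp
    ring
  rw [hrw, le_div_iff₀ hd2]
  have hkey := key_poly ρm ρp m (X + m) (Y + m) h1 (by linarith) (by linarith)
    (by linarith) (by linarith)
  have e : 1 / 4 * (ρm / ρp) * ρm * (X - Y) ^ 2 = (1 / 4 * ρm ^ 2 * (X - Y) ^ 2) / ρp := by
    field_simp
  rw [e, div_le_iff₀ hρp]
  nlinarith [hkey]
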